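/- Suppose the agent set contains at least two distinct agents a, b and the set of propositional variables contains a variable p. Then the formula S_a p is not semantically equivalent to any formula in the language Φ that contains no occurrence of the modality S. That is, for every formula ψ ∈ Φ built only from propositional variables, ¬, ∧, and the modalities C_g (g an agent), there exists an extensive form game in which ⟦S_a p⟧ ≠ ⟦ψ⟧. -/

import Mathlib

/-- An extensive form game: a nonempty finite rooted tree. Nodes are represented as
positions, i.e. lists of child indices with the *head* being the most recent step,
so the root is `[]` and the parent of `i :: t` is `t`. Each node carries an agent
label (meaningful on non-leaf nodes) and a set of propositional variables
(meaningful on leaf nodes, the outcomes). -/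
structure Game (Agent PropVar : Type) where
  Node : Set (List ℕ)
  root_mem : [] ∈ Node
  downward : ∀ (i : ℕ) (t : List ℕ), i :: t ∈ Node → t ∈ Node
  finite : Node.Finite
  label : List ℕ → Agent
  leafLabel : List ℕ → Set PropVar

namespace Game

variable {Agent PropVar : Type}

/-- A leaf node (outcome) of the game. -/
def IsOutcome (G : Game Agent PropVar) (w : List ℕ) : Prop :=
  w ∈ G.Node ∧ ∀ i : ℕ, i :: w ∉ G.Node

/-- The set `Ω(G)` of outcomes (leaf nodes) of the game. -/
def outcomes (G : Game Agent PropVar) : Set (List ℕ) := {w | G.IsOutcome w}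

/-- `w ⪯ n`: node `n` lies on the simple path (including endpoints) from the root
to `w`; in the position representation this means `n` is a suffix of `w`. -/
def below (w n : List ℕ) : Prop := n <:+ w

/-- A non-root node `n` is an `X`-achievement point by agent `a` if (1) its parent is
labelled with `a`, (2) some outcome `w ⪯ parent(n)` is not in `X`, and (3) every
outcome `w ⪯ n` is in `X`. -/
def AchievePoint (G : Game Agent PropVar) (X : Set (List ℕ)) (a : Agent) (n : List ℕ) : Prop :=
  ∃ (i : ℕ) (t : List ℕ), n = i :: t ∧ n ∈ G.Node ∧ G.label t = a ∧
    (∃ w ∈ G.outcomes, t <:+ w ∧ w ∉ X) ∧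
    (∀ w ∈ G.outcomes, n <:+ w → w ∈ X)

/-- `win_a(X)`: the minimal set of nodes containing `X`, containing every non-leaf
node labelled `a` with at least one child in the set, and containing every non-leaf
node not labelled `a` all of whose children are in the set. -/
inductive Win (G : Game Agent PropVar) (a : Agent) (X : Set (List ℕ)) : List ℕ → Prop
  | mem (w : List ℕ) (hw : w ∈ X) : Win G a X w
  | own (n : List ℕ) (hn : n ∈ G.Node) (hl : G.label n = a) (i : ℕ)
      (hi : i :: n ∈ G.Node) (h : Win G a X (i :: n)) : Win G a X n
  | other (n : List ℕ) (hn : n ∈ G.Node) (hl : G.label n ≠ a)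
      (hne : ∃ i : ℕ, i :: n ∈ G.Node)
      (h : ∀ i : ℕ, i :: n ∈ G.Node → Win G a X (i :: n)) : Win G a X n

/-- The semantic counterfactual-responsibility operator on sets of outcomes:
`Cset a X` is the set of outcomes `w ∈ X` such that some node `n` with `w ⪯ n`
belongs to `win_a(Ω(G) ∖ X)`. -/
def Cset (G : Game Agent PropVar) (a : Agent) (X : Set (List ℕ)) : Set (List ℕ) :=
  {w | w ∈ X ∧ ∃ n : List ℕ, n <:+ w ∧ G.Win a (G.outcomes \ X) n}

/-- The semantic seeing-to-it-responsibility operator on sets of outcomes: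
`Sset a X` is the set of outcomes `w` such that (a) every node `n` with `w ⪯ n`
belongs to `win_a(X)` and (b) there is an `X`-achievement point `n` by agent `a`
with `w ⪯ n`. -/
def Sset (G : Game Agent PropVar) (a : Agent) (X : Set (List ℕ)) : Set (List ℕ) :=
  {w | w ∈ G.outcomes ∧ (∀ n : List ℕ, n <:+ w → G.Win a X n) ∧
    ∃ n : List ℕ, G.AchievePoint X a n ∧ n <:+ w}

end Game

/-- The language `Φ`: `φ ::= p | ¬φ | φ∧φ | C_a φ | S_a φ`. -/
inductive Formula (Agent PropVar : Type) where
  | var : PropVar → Formula Agent PropVar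
  | neg : Formula Agent PropVar → Formula Agent PropVar
  | and : Formula Agent PropVar → Formula Agent PropVar → Formula Agent PropVar
  | C : Agent → Formula Agent PropVar → Formula Agent PropVar
  | S : Agent → Formula Agent PropVar → Formula Agent PropVar

namespace Game

variable {Agent PropVar : Type}

/-- The truth set `⟦φ⟧ ⊆ Ω(G)` of a formula. -/
def truth (G : Game Agent PropVar) : Formula Agent PropVar → Set (List ℕ)
  | .var p => {w | w ∈ G.outcomes ∧ p ∈ G.leafLabel w}
  | .neg φ => G.outcomes \ G.truth φ
  | .and φ ψ => G.truth φ ∩ G.truth ψ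
  | .C a φ => G.Cset a (G.truth φ)
  | .S a φ => G.Sset a (G.truth φ)

/-- The truth set of the `i`-th order counterfactual gap formula
`G^c_0(φ) := φ`, `G^c_{i+1}(φ) := G^c_i(φ) ∧ ⋀_{a∈𝒜} ¬C_a G^c_i(φ)`. -/
def gapCIter (G : Game Agent PropVar) (φ : Formula Agent PropVar) : ℕ → Set (List ℕ)
  | 0 => G.truth φ
  | i + 1 => G.gapCIter φ i ∩ ⋂ a : Agent, (G.outcomes \ G.Cset a (G.gapCIter φ i))

/-- The truth set of the `i`-th order combined gap formula
`G^{c,s}_0(φ) := φ`,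
`G^{c,s}_{i+1}(φ) := G^{c,s}_i(φ) ∧ ⋀_{a∈𝒜} ¬C_a G^{c,s}_i(φ) ∧ ⋀_{a∈𝒜} ¬S_a G^{c,s}_i(φ)`. -/
def gapCSIter (G : Game Agent PropVar) (φ : Formula Agent PropVar) : ℕ → Set (List ℕ)
  | 0 => G.truth φ
  | i + 1 => G.gapCSIter φ i ∩ (⋂ a : Agent, (G.outcomes \ G.Cset a (G.gapCSIter φ i)))
      ∩ (⋂ a : Agent, (G.outcomes \ G.Sset a (G.gapCSIter φ i)))

end Game

/-- `φ` contains no occurrence of the modality `C`. -/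
def Formula.noC {Agent PropVar : Type} : Formula Agent PropVar → Prop
  | .var _ => True
  | .neg φ => φ.noC
  | .and φ ψ => φ.noC ∧ ψ.noC
  | .C _ _ => False
  | .S _ φ => φ.noC

/-- `φ` contains no occurrence of the modality `S`. -/
def Formula.noS {Agent PropVar : Type} : Formula Agent PropVar → Prop
  | .var _ => True
  | .neg φ => φ.noS
  | .and φ ψ => φ.noS ∧ ψ.noS
  | .C _ φ => φ.noS
  | .S _ _ => False

namespace SUC

open List

/-- chain node at depth `j` -/
def v (j : ℕ) : List ℕ := List.replicate j 0
/-- leaf hanging off `v j` -/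
def u (j : ℕ) : List ℕ := 1 :: v j

lemma v_succ (j : ℕ) : v (j+1) = 0 :: v j := rfl

lemma length_v (j : ℕ) : (v j).length = j := List.length_replicate

lemma length_u (j : ℕ) : (u j).length = j + 1 := by simp [u, length_v]

lemma v_inj {j k : ℕ} (h : v j = v k) : j = k := by
  have := congrArg List.length h; simpa [length_v] using this

lemma u_inj {j k : ℕ} (h : u j = u k) : j = k := by
  have : v j = v k := by simpa [u] using h
  exact v_inj this

lemma u_ne_v (j k : ℕ) : u j ≠ v k := by
  cases k with
  | zero => simp [u, v]
  | succ m => intro h; rw [v_succ] at h; exact absurd (List.head_eq_of_cons_eq h) one_ne_zero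

lemma suffix_v {s : List ℕ} {j : ℕ} (h : s <:+ v j) : ∃ k ≤ j, s = v k := by
  induction j with
  | zero => exact ⟨0, le_refl 0, List.eq_nil_of_suffix_nil h⟩
  | succ m ih =>
    rw [v_succ, List.suffix_cons_iff] at h
    rcases h with h | h
    · exact ⟨m + 1, le_refl _, h⟩
    · rcases ih h with ⟨k, hk, rfl⟩; exact ⟨k, Nat.le_succ_of_le hk, rfl⟩

lemma v_suffix_v {k j : ℕ} (h : k ≤ j) : v k <:+ v j := by
  induction j with
  | zero => have : k = 0 := Nat.le_zero.mp h; subst this; exact List.suffix_refl _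
  | succ m ih =>
    rcases Nat.lt_or_ge k (m+1) with h' | h'
    · exact (ih (Nat.lt_succ_iff.mp h')).trans (by rw [v_succ]; exact List.suffix_cons 0 (v m))
    · have : k = m + 1 := le_antisymm h h'
      subst this; exact List.suffix_refl _

lemma suffix_u {s : List ℕ} {j : ℕ} (h : s <:+ u j) : s = u j ∨ ∃ k ≤ j, s = v k := by
  rw [u, List.suffix_cons_iff] at h
  rcases h with h | h
  · exact Or.inl h
  · exact Or.inr (suffix_v h)

lemma v_suffix_u {k j : ℕ} (h : k ≤ j) : v k <:+ u j :=
  (v_suffix_v h).trans (List.suffix_cons 1 (v j))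

variable {Agent PropVar : Type}

/-- the alternating chain game -/
def Gm (a b : Agent) (n : ℕ) : Game Agent PropVar where
  Node := {l | (∃ j ≤ n, l = v j) ∨ (∃ j < n, l = u j)}
  root_mem := Or.inl ⟨0, Nat.zero_le n, rfl⟩
  downward := by
    rintro i t (⟨j, hj, he⟩ | ⟨j, hj, he⟩)
    · cases j with
      | zero => exact absurd he (by simp [v])
      | succ k =>
        rw [v_succ] at he
        exact Or.inl ⟨k, Nat.le_of_succ_le hj, (List.cons_eq_cons.mp he).2⟩
    · exact Or.inl ⟨j, le_of_lt hj, (List.cons_eq_cons.mp he).2⟩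
  finite := by
    apply Set.Finite.subset (Set.Finite.union
      ((Set.finite_Iic n).image v) ((Set.finite_Iio n).image u))
    rintro l (⟨j, hj, rfl⟩ | ⟨j, hj, rfl⟩)
    · exact Or.inl ⟨j, hj, rfl⟩
    · exact Or.inr ⟨j, hj, rfl⟩
  label := fun l => if l.length % 2 = 0 then a else b
  leafLabel := fun l =>
    if (∃ j, j < n ∧ j % 2 = 1 ∧ l = u j) ∨ l = v n then Set.univ else (∅ : Set PropVar)

variable {a b : Agent} {n : ℕ}

lemma mem_node_iff {l : List ℕ} :
    l ∈ (Gm a b n : Game Agent PropVar).Node ↔ (∃ j ≤ n, l = v j) ∨ (∃ j < n, l = u j) :=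
  Iff.rfl

lemma mem_node_v {j : ℕ} (hj : j ≤ n) : v j ∈ (Gm a b n : Game Agent PropVar).Node :=
  Or.inl ⟨j, hj, rfl⟩

lemma mem_node_u {j : ℕ} (hj : j < n) : u j ∈ (Gm a b n : Game Agent PropVar).Node :=
  Or.inr ⟨j, hj, rfl⟩

lemma child_v0 {j : ℕ} (hj : j < n) : (0 : ℕ) :: v j ∈ (Gm a b n : Game Agent PropVar).Node := by
  rw [← v_succ]; exact mem_node_v hj

lemma child_v1 {j : ℕ} (hj : j < n) : (1 : ℕ) :: v j ∈ (Gm a b n : Game Agent PropVar).Node :=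
  mem_node_u hj

lemma children_v {i j : ℕ} (hi : i :: v j ∈ (Gm a b n : Game Agent PropVar).Node) :
    (i = 0 ∨ i = 1) ∧ j < n := by
  rcases hi with ⟨k, hk, he⟩ | ⟨k, hk, he⟩
  · cases k with
    | zero => exact absurd he (by simp [v])
    | succ m =>
      rw [v_succ] at he
      rcases List.cons_eq_cons.mp he with ⟨h1, h2⟩
      have := v_inj h2; subst this
      exact ⟨Or.inl h1, lt_of_lt_of_le (Nat.lt_succ_self j) hk⟩
  · rcases List.cons_eq_cons.mp he with ⟨h1, h2⟩
    have := v_inj h2; subst this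
    exact ⟨Or.inr h1, hk⟩

lemma no_child_u {i j : ℕ} (hi : i :: u j ∈ (Gm a b n : Game Agent PropVar).Node) : False := by
  rcases hi with ⟨k, _, he⟩ | ⟨k, _, he⟩
  · cases k with
    | zero => exact absurd he (by simp [v])
    | succ m =>
      rw [v_succ] at he
      have h2 := (List.cons_eq_cons.mp he).2
      exact absurd h2 (u_ne_v j m)
  · have h2 := (List.cons_eq_cons.mp he).2
    exact absurd h2 (u_ne_v j k)

lemma no_child_vn {i : ℕ} (hi : i :: v n ∈ (Gm a b n : Game Agent PropVar).Node) : False := by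
  rcases hi with ⟨k, hk, he⟩ | ⟨k, hk, he⟩
  · have := congrArg List.length he
    simp [length_v] at this
    omega
  · have h2 := (List.cons_eq_cons.mp he).2
    have := v_inj h2; omega

lemma outcome_u {j : ℕ} (hj : j < n) : u j ∈ (Gm a b n : Game Agent PropVar).outcomes :=
  ⟨mem_node_u hj, fun _ h => no_child_u h⟩

lemma outcome_vn : v n ∈ (Gm a b n : Game Agent PropVar).outcomes :=
  ⟨mem_node_v (le_refl n), fun _ h => no_child_vn h⟩

lemma v_not_outcome {j : ℕ} (hj : j < n) : v j ∉ (Gm a b n : Game Agent PropVar).outcomes :=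
  fun h => h.2 0 (child_v0 hj)

lemma mem_outcomes_iff {x : List ℕ} :
    x ∈ (Gm a b n : Game Agent PropVar).outcomes ↔ (∃ j < n, x = u j) ∨ x = v n := by
  constructor
  · rintro ⟨hx, hleaf⟩
    rcases hx with ⟨j, hj, rfl⟩ | ⟨j, hj, rfl⟩
    · rcases Nat.lt_or_ge j n with h | h
      · exact absurd (child_v0 h) (hleaf 0)
      · right; rw [le_antisymm hj h]
    · exact Or.inl ⟨j, hj, rfl⟩
  · rintro (⟨j, hj, rfl⟩ | rfl)
    · exact outcome_u hj
    · exact outcome_vn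

lemma label_v {j : ℕ} :
    (Gm a b n : Game Agent PropVar).label (v j) = if j % 2 = 0 then a else b := by
  simp [Gm, length_v]

end SUC
namespace SUC

variable {Agent PropVar : Type} {a b g : Agent} {n : ℕ} {Y : Set (List ℕ)}

/-- Win at a leaf means membership in `Y`. -/
lemma win_leaf {l : List ℕ} (hleaf : ∀ i : ℕ, i :: l ∉ (Gm a b n : Game Agent PropVar).Node)
    (h : (Gm a b n : Game Agent PropVar).Win g Y l) : l ∈ Y := by
  cases h with
  | mem _ hw => exact hw
  | own _ _ _ i hi _ => exact absurd hi (hleaf i)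
  | other _ _ _ hne _ => rcases hne with ⟨i, hi⟩; exact absurd hi (hleaf i)

lemma win_u_mem {j : ℕ} (h : (Gm a b n : Game Agent PropVar).Win g Y (u j)) : u j ∈ Y :=
  win_leaf (fun _ hi => no_child_u hi) h

lemma win_vn_mem (h : (Gm a b n : Game Agent PropVar).Win g Y (v n)) : v n ∈ Y :=
  win_leaf (fun _ hi => no_child_vn hi) h

lemma win_mem {l : List ℕ} (h : l ∈ Y) : (Gm a b n : Game Agent PropVar).Win g Y l :=
  Game.Win.mem l h

lemma win_own_leaf {j : ℕ} (hj : j < n)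
    (hl : (Gm a b n : Game Agent PropVar).label (v j) = g) (hu : u j ∈ Y) :
    (Gm a b n : Game Agent PropVar).Win g Y (v j) :=
  Game.Win.own _ (mem_node_v (le_of_lt hj)) hl 1 (child_v1 hj) (win_mem hu)

lemma win_own_step {j : ℕ} (hj : j < n)
    (hl : (Gm a b n : Game Agent PropVar).label (v j) = g)
    (h : (Gm a b n : Game Agent PropVar).Win g Y (v (j+1))) :
    (Gm a b n : Game Agent PropVar).Win g Y (v j) :=
  Game.Win.own _ (mem_node_v (le_of_lt hj)) hl 0 (child_v0 hj) (by rw [← v_succ]; exact h)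

lemma win_other {j : ℕ} (hj : j < n)
    (hl : (Gm a b n : Game Agent PropVar).label (v j) ≠ g) (hu : u j ∈ Y)
    (h : (Gm a b n : Game Agent PropVar).Win g Y (v (j+1))) :
    (Gm a b n : Game Agent PropVar).Win g Y (v j) := by
  refine Game.Win.other _ (mem_node_v (le_of_lt hj)) hl ⟨0, child_v0 hj⟩ ?_
  intro i hi
  rcases (children_v hi).1 with rfl | rfl
  · rw [← v_succ]; exact h
  · exact win_mem hu

/-- Inversion for Win at an internal chain node. -/
lemma win_v_inv {j : ℕ} (hj : j < n) (hY : Y ⊆ (Gm a b n : Game Agent PropVar).outcomes)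
    (h : (Gm a b n : Game Agent PropVar).Win g Y (v j)) :
    ((Gm a b n : Game Agent PropVar).label (v j) = g ∧
      (u j ∈ Y ∨ (Gm a b n : Game Agent PropVar).Win g Y (v (j+1)))) ∨
    ((Gm a b n : Game Agent PropVar).label (v j) ≠ g ∧
      u j ∈ Y ∧ (Gm a b n : Game Agent PropVar).Win g Y (v (j+1))) := by
  cases h with
  | mem _ hw => exact absurd (hY hw) (v_not_outcome hj)
  | own _ _ hl i hi hw =>
    rcases (children_v hi).1 with rfl | rfl
    · exact Or.inl ⟨hl, Or.inr (by rw [v_succ]; exact hw)⟩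
    · exact Or.inl ⟨hl, Or.inl (win_u_mem hw)⟩
  | other _ _ hl _ hc =>
    refine Or.inr ⟨hl, win_u_mem (hc 1 (child_v1 hj)), ?_⟩
    rw [v_succ]; exact hc 0 (child_v0 hj)

/-- downward induction helper -/
lemma downInd (N : ℕ) (P : ℕ → Prop) (base : P N)
    (step : ∀ j, j < N → P (j+1) → P j) : ∀ j, j ≤ N → P j := by
  have key : ∀ m j, j + m = N → P j := by
    intro m
    induction m with
    | zero => intro j h; rw [Nat.add_zero] at h; rw [h]; exact base
    | succ k ih =>
      intro j h
      exact step j (by omega) (ih (j+1) (by omega))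
  exact fun j hj => key (N - j) j (by omega)

lemma label_parity {j k : ℕ} (h : j % 2 = k % 2) :
    (Gm a b n : Game Agent PropVar).label (v j) = (Gm a b n : Game Agent PropVar).label (v k) := by
  rw [label_v, label_v, h]

/-- If all relevant leaves are in `Y`, everything on the chain from level `d` wins. -/
lemma win_all {d : ℕ} (hall : ∀ k, d ≤ k → k < n → u k ∈ Y) (hw : v n ∈ Y) :
    ∀ j, d ≤ j → j ≤ n → (Gm a b n : Game Agent PropVar).Win g Y (v j) := by
  intro j hd hj
  refine downInd n (fun j => d ≤ j → (Gm a b n : Game Agent PropVar).Win g Y (v j))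
    (fun _ => win_mem hw) ?_ j hj hd
  · intro j hj ih hd
    by_cases hl : (Gm a b n : Game Agent PropVar).label (v j) = g
    · exact win_own_leaf hj hl (hall j hd hj)
    · exact win_other hj hl (hall j hd hj) (ih (by omega))

/-- For agent `a`, the odd leaves together with the top leaf suffice. -/
lemma win_chain_a (hab : a ≠ b) {d : ℕ}
    (hodd : ∀ k, d ≤ k → k < n → k % 2 = 1 → u k ∈ Y) (hw : v n ∈ Y) :
    ∀ j, d ≤ j → j ≤ n → (Gm a b n : Game Agent PropVar).Win a Y (v j) := by
  intro j hd hj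
  refine downInd n (fun j => d ≤ j → (Gm a b n : Game Agent PropVar).Win a Y (v j))
    (fun _ => win_mem hw) ?_ j hj hd
  · intro j hj ih hd
    rcases Nat.mod_two_eq_zero_or_one j with h2 | h2
    · exact win_own_step hj (by rw [label_v, h2]; simp) (ih (by omega))
    · refine win_other hj ?_ (hodd j hd hj h2) (ih (by omega))
      rw [label_v, h2]; simpa using fun h => hab h.symm

end SUC
namespace SUC

variable {Agent PropVar : Type} {a b g : Agent} {n : ℕ} {Y X : Set (List ℕ)}

/-- graded indistinguishability invariant -/
def InvP (a b : Agent) (n d : ℕ) (X : Set (List ℕ)) : Prop :=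
  (∀ j k, d ≤ j → j < n → d ≤ k → k < n → j % 2 = k % 2 → (u j ∈ X ↔ u k ∈ X)) ∧
  (∀ j, d ≤ j → j < n → j % 2 = 1 → (u j ∈ X ↔ v n ∈ X))

lemma invP_mono {d d' : ℕ} (h : InvP a b n d X) (hdd : d ≤ d') : InvP a b n d' X :=
  ⟨fun j k h1 h2 h3 h4 h5 => h.1 j k (le_trans hdd h1) h2 (le_trans hdd h3) h4 h5,
   fun j h1 h2 h3 => h.2 j (le_trans hdd h1) h2 h3⟩

/-- the "own a leaf in Y near the bottom" construction -/
lemma ownleaf_case {d j : ℕ} (hd2 : d + 2 ≤ n)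
    (hYe : ∀ j k, d ≤ j → j < n → d ≤ k → k < n → j % 2 = k % 2 → (u j ∈ Y ↔ u k ∈ Y))
    (hdj : d ≤ j) (hjn : j < n)
    (hl : (Gm a b n : Game Agent PropVar).label (v j) = g) (hu : u j ∈ Y) :
    ∃ j' ≤ d + 1, (Gm a b n : Game Agent PropVar).Win g Y (v j') := by
  obtain ⟨m, hdm, hmd, hpar⟩ : ∃ m, d ≤ m ∧ m ≤ d + 1 ∧ m % 2 = j % 2 := by
    by_cases h : j % 2 = d % 2
    · exact ⟨d, le_refl _, by omega, by omega⟩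
    · exact ⟨d + 1, by omega, le_refl _, by omega⟩
  have hmn : m < n := by omega
  have hum : u m ∈ Y := (hYe m j hdm hmn hdj hjn hpar).mpr hu
  have hlm : (Gm a b n : Game Agent PropVar).label (v m) = g := by
    rw [label_parity hpar]; exact hl
  exact ⟨m, hmd, win_own_leaf hmn hlm hum⟩

/-- KEY LEMMA: a win above level `d+1` forces a win at level `≤ d+1`. -/
lemma descend {d : ℕ} (hab : a ≠ b) (hd2 : d + 2 ≤ n) (hn : n % 2 = 1)
    (hY : Y ⊆ (Gm a b n : Game Agent PropVar).outcomes)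
    (hYe : ∀ j k, d ≤ j → j < n → d ≤ k → k < n → j % 2 = k % 2 → (u j ∈ Y ↔ u k ∈ Y))
    (hYo : ∀ j, d ≤ j → j < n → j % 2 = 1 → (u j ∈ Y ↔ v n ∈ Y)) :
    ∀ j, d + 1 ≤ j → j < n →
      (Gm a b n : Game Agent PropVar).Win g Y (v j) →
      ∃ j' ≤ d + 1, (Gm a b n : Game Agent PropVar).Win g Y (v j') := by
  intro j hdj hjn hwin
  refine downInd (n-1)
    (fun j => d + 1 ≤ j → (Gm a b n : Game Agent PropVar).Win g Y (v j) →
      ∃ j' ≤ d + 1, (Gm a b n : Game Agent PropVar).Win g Y (v j')) ?base ?step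
    j (by omega) hdj hwin
  case base =>
    intro hd hwin
    have hn1 : n - 1 < n := by omega
    rcases win_v_inv hn1 hY hwin with ⟨hl, hu | hwn⟩ | ⟨hl, hu, hwn⟩
    · exact ownleaf_case hd2 hYe (by omega) hn1 hl hu
    · -- win at v n: so v n ∈ Y; owner of v (n-1) is a (since n-1 even)
      rw [(by omega : n - 1 + 1 = n)] at hwn
      have hvnY : v n ∈ Y := win_vn_mem hwn
      have hga : g = a := by
        rw [label_v] at hl
        rw [if_pos (by omega)] at hl
        exact hl.symm
      subst hga
      have hodd : ∀ k, d ≤ k → k < n → k % 2 = 1 → u k ∈ Y :=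
        fun k h1 h2 h3 => (hYo k h1 h2 h3).mpr hvnY
      exact ⟨d + 1, le_refl _, win_chain_a hab hodd hvnY (d+1) (by omega) (by omega)⟩
    · -- both children: all leaves from level d are in Y
      rw [(by omega : n - 1 + 1 = n)] at hwn
      have hvnY : v n ∈ Y := win_vn_mem hwn
      have hall : ∀ k, d ≤ k → k < n → u k ∈ Y := by
        intro k h1 h2
        rcases Nat.mod_two_eq_zero_or_one k with h3 | h3
        · exact (hYe k (n-1) h1 h2 (by omega) hn1 (by omega)).mpr hu
        · exact (hYo k h1 h2 h3).mpr hvnY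
      exact ⟨d + 1, le_refl _, win_all hall hvnY (d+1) (by omega) (by omega)⟩
  case step =>
    intro j hj ih hd hwin
    rcases win_v_inv (by omega : j < n) hY hwin with ⟨hl, hu | hwn⟩ | ⟨_, _, hwn⟩
    · exact ownleaf_case hd2 hYe (by omega) (by omega) hl hu
    · exact ih (by omega) hwn
    · exact ih (by omega) hwn

end SUC
namespace SUC

variable {Agent PropVar : Type} {a b g : Agent} {n : ℕ} {X : Set (List ℕ)}

lemma mem_Cset_u {j : ℕ} (hj : j < n) (hx : u j ∈ X) :
    (u j ∈ (Gm a b n : Game Agent PropVar).Cset g X ↔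
      ∃ k ≤ j, (Gm a b n : Game Agent PropVar).Win g
        ((Gm a b n : Game Agent PropVar).outcomes \ X) (v k)) := by
  constructor
  · rintro ⟨_, s, hs, hwin⟩
    rcases suffix_u hs with rfl | ⟨k, hk, rfl⟩
    · exact absurd (win_u_mem hwin).2 (not_not_intro hx)
    · exact ⟨k, hk, hwin⟩
  · rintro ⟨k, hk, hwin⟩
    exact ⟨hx, v k, v_suffix_u hk, hwin⟩

lemma mem_Cset_w (hx : v n ∈ X) :
    (v n ∈ (Gm a b n : Game Agent PropVar).Cset g X ↔
      ∃ k < n, (Gm a b n : Game Agent PropVar).Win g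
        ((Gm a b n : Game Agent PropVar).outcomes \ X) (v k)) := by
  constructor
  · rintro ⟨_, s, hs, hwin⟩
    rcases suffix_v hs with ⟨k, hk, rfl⟩
    rcases Nat.lt_or_ge k n with h | h
    · exact ⟨k, h, hwin⟩
    · have : k = n := le_antisymm hk h
      subst this
      exact absurd (win_vn_mem hwin).2 (not_not_intro hx)
  · rintro ⟨k, hk, hwin⟩
    exact ⟨hx, v k, v_suffix_v (le_of_lt hk), hwin⟩

lemma not_mem_Cset {x : List ℕ} (hx : x ∉ X) :
    x ∉ (Gm a b n : Game Agent PropVar).Cset g X := fun h => hx h.1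

/-- CRUX: the invariant is preserved by `Cset`, at the cost of one level. -/
lemma crux {d : ℕ} (hab : a ≠ b) (hd2 : d + 2 ≤ n) (hn : n % 2 = 1)
    (hI : InvP a b n d X) :
    InvP a b n (d+1) ((Gm a b n : Game Agent PropVar).Cset g X) := by
  set Y : Set (List ℕ) := (Gm a b n : Game Agent PropVar).outcomes \ X with hYdef
  have hY : Y ⊆ (Gm a b n : Game Agent PropVar).outcomes := Set.diff_subset
  have hYu : ∀ j, j < n → (u j ∈ Y ↔ ¬ u j ∈ X) := by
    intro j hj
    constructor
    · exact fun h => h.2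
    · exact fun h => ⟨outcome_u hj, h⟩
  have hYw : v n ∈ Y ↔ ¬ v n ∈ X := ⟨fun h => h.2, fun h => ⟨outcome_vn, h⟩⟩
  have hYe : ∀ j k, d ≤ j → j < n → d ≤ k → k < n → j % 2 = k % 2 → (u j ∈ Y ↔ u k ∈ Y) := by
    intro j k h1 h2 h3 h4 h5
    rw [hYu j h2, hYu k h4]
    exact not_congr (hI.1 j k h1 h2 h3 h4 h5)
  have hYo : ∀ j, d ≤ j → j < n → j % 2 = 1 → (u j ∈ Y ↔ v n ∈ Y) := by
    intro j h1 h2 h3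
    rw [hYu j h2, hYw]
    exact not_congr (hI.2 j h1 h2 h3)
  have hdesc := descend (g := g) hab hd2 hn hY hYe hYo
  -- transfer of the win-below-level condition
  have Qle : ∀ j k, d + 1 ≤ j → d + 1 ≤ k → k < n →
      (∃ k' ≤ k, (Gm a b n : Game Agent PropVar).Win g Y (v k')) →
      (∃ k' ≤ j, (Gm a b n : Game Agent PropVar).Win g Y (v k')) := by
    rintro j k hj hk hkn ⟨k', hk', hwin⟩
    rcases le_or_gt k' (d+1) with h | h
    · exact ⟨k', by omega, hwin⟩
    · rcases hdesc k' (by omega) (by omega) hwin with ⟨j', hj', hwin'⟩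
      exact ⟨j', by omega, hwin'⟩
  constructor
  · intro j k h1 h2 h3 h4 h5
    by_cases hxj : u j ∈ X
    · have hxk : u k ∈ X := (hI.1 j k (by omega) h2 (by omega) h4 h5).mp hxj
      rw [mem_Cset_u h2 hxj, mem_Cset_u h4 hxk]
      exact ⟨Qle k j h3 h1 h2, Qle j k h1 h3 h4⟩
    · have hxk : ¬ u k ∈ X := fun h => hxj ((hI.1 j k (by omega) h2 (by omega) h4 h5).mpr h)
      exact iff_of_false (not_mem_Cset hxj) (not_mem_Cset hxk)
  · intro j h1 h2 h3
    by_cases hxj : u j ∈ X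
    · have hxw : v n ∈ X := (hI.2 j (by omega) h2 h3).mp hxj
      rw [mem_Cset_u h2 hxj, mem_Cset_w hxw]
      constructor
      · rintro ⟨k, hk, hwin⟩
        exact ⟨k, by omega, hwin⟩
      · rintro ⟨k, hk, hwin⟩
        exact Qle j (n-1) h1 (by omega) (by omega) ⟨k, by omega, hwin⟩
    · have hxw : ¬ v n ∈ X := fun h => hxj ((hI.2 j (by omega) h2 h3).mpr h)
      exact iff_of_false (not_mem_Cset hxj) (not_mem_Cset hxw)

end SUC
namespace SUC

variable {Agent PropVar : Type} {a b : Agent} {n : ℕ}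

/-- modal depth (counting both modalities) -/
def Cdepth : Formula Agent PropVar → ℕ
  | .var _ => 0
  | .neg φ => Cdepth φ
  | .and φ ψ => max (Cdepth φ) (Cdepth ψ)
  | .C _ φ => Cdepth φ + 1
  | .S _ φ => Cdepth φ + 1

lemma truth_subset {G : Game Agent PropVar} : ∀ φ, G.truth φ ⊆ G.outcomes
  | .var _ => fun _ hx => hx.1
  | .neg _ => fun _ hx => hx.1
  | .and φ _ => fun _ hx => truth_subset φ hx.1
  | .C _ φ => fun _ hx => truth_subset φ hx.1
  | .S _ _ => fun _ hx => hx.1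

lemma leafLabel_u {j : ℕ} : (Gm a b n : Game Agent PropVar).leafLabel (u j) =
    if j < n ∧ j % 2 = 1 then Set.univ else ∅ := by
  show (if (∃ k, k < n ∧ k % 2 = 1 ∧ u j = u k) ∨ u j = v n then (Set.univ : Set PropVar)
      else ∅) = _
  refine if_congr ?_ rfl rfl
  constructor
  · rintro (⟨k, hk, hk2, he⟩ | he)
    · obtain rfl := u_inj he; exact ⟨hk, hk2⟩
    · exact absurd he (u_ne_v j n)
  · rintro ⟨h1, h2⟩; exact Or.inl ⟨j, h1, h2, rfl⟩

lemma leafLabel_vn : (Gm a b n : Game Agent PropVar).leafLabel (v n) = Set.univ := by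
  show (if (∃ k, k < n ∧ k % 2 = 1 ∧ v n = u k) ∨ v n = v n then (Set.univ : Set PropVar)
      else ∅) = _
  rw [if_pos (Or.inr rfl)]

lemma mem_var_u {q : PropVar} {j : ℕ} (hj : j < n) :
    u j ∈ (Gm a b n : Game Agent PropVar).truth (.var q) ↔ j % 2 = 1 := by
  show u j ∈ (Gm a b n : Game Agent PropVar).outcomes ∧
      q ∈ (Gm a b n : Game Agent PropVar).leafLabel (u j) ↔ _
  rw [leafLabel_u]
  constructor
  · rintro ⟨_, hq⟩
    by_cases h : j < n ∧ j % 2 = 1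
    · exact h.2
    · rw [if_neg h] at hq; exact absurd hq (Set.notMem_empty q)
  · intro h
    exact ⟨outcome_u hj, by rw [if_pos ⟨hj, h⟩]; trivial⟩

lemma mem_var_w {q : PropVar} : v n ∈ (Gm a b n : Game Agent PropVar).truth (.var q) :=
  ⟨outcome_vn, by rw [leafLabel_vn]; trivial⟩

lemma invP_diff {d : ℕ} {X : Set (List ℕ)} (h : InvP a b n d X) :
    InvP a b n d ((Gm a b n : Game Agent PropVar).outcomes \ X) := by
  constructor
  · intro j k h1 h2 h3 h4 h5
    have := h.1 j k h1 h2 h3 h4 h5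
    constructor
    · rintro ⟨_, hx⟩; exact ⟨outcome_u h4, fun hh => hx (this.mpr hh)⟩
    · rintro ⟨_, hx⟩; exact ⟨outcome_u h2, fun hh => hx (this.mp hh)⟩
  · intro j h1 h2 h3
    have := h.2 j h1 h2 h3
    constructor
    · rintro ⟨_, hx⟩; exact ⟨outcome_vn, fun hh => hx (this.mpr hh)⟩
    · rintro ⟨_, hx⟩; exact ⟨outcome_u h2, fun hh => hx (this.mp hh)⟩

lemma invP_inter {d : ℕ} {X X' : Set (List ℕ)} (h : InvP a b n d X) (h' : InvP a b n d X') :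
    InvP a b n d (X ∩ X') := by
  constructor
  · intro j k h1 h2 h3 h4 h5
    exact and_congr (h.1 j k h1 h2 h3 h4 h5) (h'.1 j k h1 h2 h3 h4 h5)
  · intro j h1 h2 h3
    exact and_congr (h.2 j h1 h2 h3) (h'.2 j h1 h2 h3)

lemma invTruth (hab : a ≠ b) (hn : n % 2 = 1) :
    ∀ φ : Formula Agent PropVar, φ.noS → Cdepth φ + 1 ≤ n →
      InvP a b n (Cdepth φ) ((Gm a b n : Game Agent PropVar).truth φ) := by
  intro φ
  induction φ with
  | var q =>
    intro _ _
    constructor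
    · intro j k h1 h2 h3 h4 h5
      rw [mem_var_u h2, mem_var_u h4]
      omega
    · intro j h1 h2 h3
      rw [mem_var_u h2]
      exact ⟨fun _ => mem_var_w, fun _ => h3⟩
  | neg φ ih =>
    intro hS hd
    exact invP_diff (ih hS hd)
  | and φ ψ ih1 ih2 =>
    intro hS hd
    have d1 : Cdepth (Formula.and φ ψ) = max (Cdepth φ) (Cdepth ψ) := rfl
    refine invP_inter ?_ ?_
    · exact invP_mono (ih1 hS.1 (by rw [d1] at hd; omega)) (by rw [d1]; omega)
    · exact invP_mono (ih2 hS.2 (by rw [d1] at hd; omega)) (by rw [d1]; omega)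
  | C g φ ih =>
    intro hS hd
    have hd' : Cdepth (Formula.C g φ) = Cdepth φ + 1 := rfl
    rw [hd'] at hd
    exact crux hab (by omega) hn (ih hS (by omega))
  | S g φ ih =>
    intro hS _
    exact absurd hS (by simp [Formula.noS])

lemma w_mem_S (hab : a ≠ b) (hn : n % 2 = 1) {p : PropVar} :
    v n ∈ (Gm a b n : Game Agent PropVar).truth (.S a (.var p)) := by
  have hn1 : 1 ≤ n := by omega
  have hXw : v n ∈ (Gm a b n : Game Agent PropVar).truth (.var p) := mem_var_w
  have hodd : ∀ k, 0 ≤ k → k < n → k % 2 = 1 →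
      u k ∈ (Gm a b n : Game Agent PropVar).truth (.var p) :=
    fun k _ h2 h3 => (mem_var_u h2).mpr h3
  refine ⟨outcome_vn, ?_, ?_⟩
  · intro s hs
    rcases suffix_v hs with ⟨k, hk, rfl⟩
    exact win_chain_a hab hodd hXw k (Nat.zero_le k) hk
  · refine ⟨v n, ⟨0, v (n-1), ?_, mem_node_v (le_refl n), ?_, ?_, ?_⟩, List.suffix_refl _⟩
    · rw [(by omega : n = n - 1 + 1), v_succ]
      simp [Nat.sub_add_cancel hn1]
    · rw [label_v, if_pos (by omega)]
    · refine ⟨u (n-1), outcome_u (by omega), List.suffix_cons 1 (v (n-1)), ?_⟩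
      rw [mem_var_u (by omega)]
      omega
    · intro w'' hw'' hsuf
      rcases mem_outcomes_iff.mp hw'' with ⟨k, hk, rfl⟩ | rfl
      · rcases suffix_u hsuf with he | ⟨m, hm, he⟩
        · exact absurd he.symm (u_ne_v k n)
        · have := v_inj he; omega
      · exact hXw

lemma u_not_mem_S (hab : a ≠ b) (hn : n % 2 = 1) {p : PropVar} {j : ℕ} (hj : j < n) :
    u j ∉ (Gm a b n : Game Agent PropVar).truth (.S a (.var p)) := by
  rintro ⟨_, _, s, hach, hsuf⟩
  rcases suffix_u hsuf with rfl | ⟨k, hk, rfl⟩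
  · obtain ⟨i, t, heq, _, hlab, _, hall⟩ := hach
    obtain ⟨hi, ht⟩ := List.cons_eq_cons.mp heq
    subst ht
    have hjX := hall (u j) (outcome_u hj) (List.suffix_refl _)
    rw [mem_var_u hj] at hjX
    rw [label_v, if_neg (by omega)] at hlab
    exact hab hlab.symm
  · obtain ⟨i, t, heq, _, hlab, _, hall⟩ := hach
    cases k with
    | zero => exact absurd heq (by simp [v])
    | succ m =>
      rw [v_succ] at heq
      obtain ⟨hi, ht⟩ := List.cons_eq_cons.mp heq
      subst ht
      rw [label_v] at hlab
      have hm2 : m % 2 = 0 := by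
        by_contra h
        rw [if_neg h] at hlab
        exact hab hlab.symm
      have hmn : m + 2 < n := by omega
      have := hall (u (m+2)) (outcome_u (by omega)) (v_suffix_u (by omega))
      rw [mem_var_u (by omega)] at this
      omega

end SUC
/-- if the agent set contains two distinct agents `a`, `b` and there is
a propositional variable `p`, then `S_a p` is not semantically equivalent to any
formula containing no occurrence of the modality `S`. -/
theorem S_undefinable_via_C {Agent PropVar : Type}
    (a b : Agent) (hab : a ≠ b) (p : PropVar) :
    ∀ ψ : Formula Agent PropVar, ψ.noS →
      ∃ G : Game Agent PropVar, G.truth (.S a (.var p)) ≠ G.truth ψ := by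
  intro ψ hψ
  set D : ℕ := SUC.Cdepth ψ with hD
  set n : ℕ := 2 * D + 3 with hndef
  have hn : n % 2 = 1 := by omega
  refine ⟨SUC.Gm a b n, fun heq => ?_⟩
  have hInv := SUC.invTruth hab hn ψ hψ (by omega)
  have hw := SUC.w_mem_S (n := n) hab hn (p := p)
  have hu := SUC.u_not_mem_S (n := n) hab hn (p := p) (j := n - 2) (by omega)
  have h2 := hInv.2 (n - 2) (by omega) (by omega) (by omega)
  rw [heq] at hw
  have hmem := h2.mpr hw
  rw [← heq] at hmem
  exact hu hmem
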